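/- The space N of polynomial vector fields on ℝ² that are tangentially-vanishing on the unit circle (i.e. p(x,y)ᵀ(−y,x)ᵀ = 0 whenever x²+y² = 1) equals {N(x,y)·q(x,y) : q ∈ ℝ[x,y]²}, where N(x,y) = [[1−y², xy],[xy, 1−x²]]. -/

import Mathlib

open MvPolynomial

private lemma aux_eval (c : MvPolynomial (Fin 1) ℝ) (t : ℝ) :
    Polynomial.eval t (aeval (fun _ : Fin 1 => (Polynomial.X : Polynomial ℝ)) c) =
      eval ![t] c := by
  induction c using MvPolynomial.induction_on with
  | C a => simp [algebraMap_eq]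
  | add f g hf hg => simp [hf, hg]
  | mul_X f i hf =>
    simp only [map_mul, aeval_X, Polynomial.eval_mul, hf, eval_mul, eval_X, Polynomial.eval_X]
    congr 1
    fin_cases i
    simp

private lemma fin1_eval_zero (c : MvPolynomial (Fin 1) ℝ)
    (hc : ∀ t : ℝ, t ∈ Set.Ioo (-1 : ℝ) 1 → eval ![t] c = 0) : c = 0 := by
  set p : Polynomial ℝ := aeval (fun _ : Fin 1 => (Polynomial.X : Polynomial ℝ)) c with hp
  have hIoo : (Set.Ioo (-1 : ℝ) 1).Infinite := Set.Ioo_infinite (by norm_num : (-1:ℝ) < 1)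
  have hproots : p = 0 := by
    apply Polynomial.eq_zero_of_infinite_isRoot
    apply hIoo.mono
    intro t ht
    simp only [Set.mem_setOf_eq, Polynomial.IsRoot, hp, aux_eval]
    exact hc t ht
  apply MvPolynomial.funext
  intro z
  have hz : z = ![z 0] := by
    funext i; fin_cases i; rfl
  rw [hz, ← aux_eval, ← hp, hproots, Polynomial.eval_zero, map_zero]

/-- A polynomial vanishing on the unit circle is divisible by `X₀² + X₁² - 1`. -/
private lemma circle_dvd (f : MvPolynomial (Fin 2) ℝ)
    (hf : ∀ x y : ℝ, x ^ 2 + y ^ 2 = 1 → eval ![x, y] f = 0) :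
    ∃ h : MvPolynomial (Fin 2) ℝ, f = (X 0 ^ 2 + X 1 ^ 2 - 1) * h := by
  classical
  set φ := MvPolynomial.finSuccEquiv ℝ 1 with hφ
  set F : Polynomial (MvPolynomial (Fin 1) ℝ) := φ f with hF
  set d : Polynomial (MvPolynomial (Fin 1) ℝ) :=
    Polynomial.X ^ 2 + Polynomial.C (X 0 ^ 2 - 1) with hd
  have hdmonic : d.Monic := by
    apply Polynomial.monic_X_pow_add (n := 2)
    exact lt_of_le_of_lt Polynomial.degree_C_le (by norm_num)
  have hddeg : d.degree = 2 := by
    rw [hd]; exact Polynomial.degree_X_pow_add_C (by norm_num) _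
  have hdeval : ∀ x y : ℝ, Polynomial.eval x (Polynomial.map (eval ![y]) d)
      = x ^ 2 + y ^ 2 - 1 := by
    intro x y
    rw [hd, Polynomial.map_add, Polynomial.map_pow, Polynomial.map_X, Polynomial.map_C,
      Polynomial.eval_add, Polynomial.eval_pow, Polynomial.eval_X, Polynomial.eval_C,
      map_sub, map_pow, map_one, eval_X]
    simp only [Matrix.cons_val_zero]
    ring
  have heval : ∀ x y : ℝ, eval ![x, y] f
      = Polynomial.eval x (Polynomial.map (eval ![y]) F) := by
    intro x y
    have h1 : (![x, y] : Fin 2 → ℝ) = Fin.cons x ![y] := by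
      funext i; fin_cases i <;> rfl
    rw [h1, MvPolynomial.eval_eq_eval_mv_eval']
  have hdiv : F %ₘ d + d * (F /ₘ d) = F := Polynomial.modByMonic_add_div F d
  set R := F %ₘ d with hR
  have hdeg : R.degree < 2 := by
    have := Polynomial.degree_modByMonic_lt F hdmonic
    rwa [hddeg] at this
  have hdeg1 : R.degree ≤ 1 := by
    cases hD : R.degree with
    | bot => exact bot_le
    | coe n =>
      have h2 : (2 : WithBot ℕ) = ((2 : ℕ) : WithBot ℕ) := rfl
      rw [hD, h2] at hdeg
      have hn : n < 2 := WithBot.coe_lt_coe.mp hdeg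
      have h1 : (1 : WithBot ℕ) = ((1 : ℕ) : WithBot ℕ) := rfl
      rw [h1]
      exact WithBot.coe_le_coe.mpr (Nat.lt_succ_iff.mp hn)
  have hRform : R = Polynomial.C (R.coeff 1) * Polynomial.X + Polynomial.C (R.coeff 0) :=
    Polynomial.eq_X_add_C_of_degree_le_one hdeg1
  have hRzero : ∀ x y : ℝ, x ^ 2 + y ^ 2 = 1 →
      eval ![y] (R.coeff 1) * x + eval ![y] (R.coeff 0) = 0 := by
    intro x y hxy
    have h0 := hf x y hxy
    rw [heval] at h0
    have hFsplit : Polynomial.map (eval ![y]) F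
        = Polynomial.map (eval ![y]) R + Polynomial.map (eval ![y]) (d * (F /ₘ d)) := by
      rw [← Polynomial.map_add, hdiv]
    rw [hFsplit] at h0
    have hdz : Polynomial.eval x (Polynomial.map (eval ![y]) (d * (F /ₘ d))) = 0 := by
      rw [Polynomial.map_mul, Polynomial.eval_mul, hdeval x y, hxy]
      norm_num
    rw [Polynomial.eval_add, hdz, add_zero] at h0
    calc eval ![y] (R.coeff 1) * x + eval ![y] (R.coeff 0)
        = Polynomial.eval x (Polynomial.map (eval ![y]) R) := by
          conv_rhs => rw [hRform]
          simp only [Polynomial.map_add, Polynomial.map_mul, Polynomial.map_C, Polynomial.map_X,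
            Polynomial.eval_add, Polynomial.eval_mul, Polynomial.eval_C, Polynomial.eval_X]
      _ = 0 := h0
  have hc0 : R.coeff 0 = 0 := by
    apply fin1_eval_zero
    intro t ht
    obtain ⟨ht1, ht2⟩ := ht
    have hx2 : (0:ℝ) < 1 - t ^ 2 := by nlinarith
    set s := Real.sqrt (1 - t ^ 2) with hs
    have hs2 : s ^ 2 + t ^ 2 = 1 := by
      rw [hs, Real.sq_sqrt hx2.le]; ring
    have hs2' : (-s) ^ 2 + t ^ 2 = 1 := by rw [neg_pow]; simpa using hs2
    have e1 := hRzero s t hs2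
    have e2 := hRzero (-s) t hs2'
    nlinarith [e1, e2]
  have hc1 : R.coeff 1 = 0 := by
    apply fin1_eval_zero
    intro t ht
    obtain ⟨ht1, ht2⟩ := ht
    have hx2 : (0:ℝ) < 1 - t ^ 2 := by nlinarith
    set s := Real.sqrt (1 - t ^ 2) with hs
    have hspos : 0 < s := Real.sqrt_pos.mpr hx2
    have hs2 : s ^ 2 + t ^ 2 = 1 := by
      rw [hs, Real.sq_sqrt hx2.le]; ring
    have hs2' : (-s) ^ 2 + t ^ 2 = 1 := by rw [neg_pow]; simpa using hs2
    have e1 := hRzero s t hs2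
    have e2 := hRzero (-s) t hs2'
    have : eval ![t] (R.coeff 1) * s = 0 := by linarith
    rcases mul_eq_zero.mp this with h | h
    · exact h
    · exact absurd h hspos.ne'
  have hR0 : R = 0 := by
    rw [hRform, hc0, hc1]; simp
  have hFd : F = d * (F /ₘ d) := by
    have h2 := hdiv
    rw [hR0, zero_add] at h2
    exact h2.symm
  refine ⟨φ.symm (F /ₘ d), ?_⟩
  have hdsymm : φ.symm d = X 0 ^ 2 + X 1 ^ 2 - 1 := by
    have h1 : φ (X 0 ^ 2 + X 1 ^ 2 - 1 : MvPolynomial (Fin 2) ℝ)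
        = Polynomial.X ^ 2 + Polynomial.C (X 0 ^ 2 - 1) := by
      have hx1 : (1 : Fin 2) = (0 : Fin 1).succ := rfl
      rw [map_sub, map_add, map_pow, map_pow, hφ, finSuccEquiv_X_zero, hx1,
        finSuccEquiv_X_succ, map_one, Polynomial.C_sub, Polynomial.C_pow, Polynomial.C_1]
      ring
    rw [hd, ← h1, AlgEquiv.symm_apply_apply]
  calc f = φ.symm F := by rw [hF, AlgEquiv.symm_apply_apply]
    _ = φ.symm d * φ.symm (F /ₘ d) := by conv_lhs => rw [hFd, map_mul]
    _ = (X 0 ^ 2 + X 1 ^ 2 - 1) * φ.symm (F /ₘ d) := by rw [hdsymm]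

/-- The space of polynomial vector fields normal on the unit circle equals
`{N(x,y) q : q ∈ ℝ[x,y]²}` where `N(x,y) = [[1−y², xy],[xy, 1−x²]]`. -/
theorem normal_polynomials_eq_N_module :
    {p : Fin 2 → MvPolynomial (Fin 2) ℝ |
      ∀ x y : ℝ, x ^ 2 + y ^ 2 = 1 →
        -y * eval ![x, y] (p 0) + x * eval ![x, y] (p 1) = 0} =
    {p : Fin 2 → MvPolynomial (Fin 2) ℝ |
      ∃ q : Fin 2 → MvPolynomial (Fin 2) ℝ,
        p 0 = (1 - X 1 ^ 2) * q 0 + X 0 * X 1 * q 1 ∧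
        p 1 = X 0 * X 1 * q 0 + (1 - X 0 ^ 2) * q 1} := by
  ext p
  simp only [Set.mem_setOf_eq]
  constructor
  · intro hp
    obtain ⟨h, hh⟩ := circle_dvd (-X 1 * p 0 + X 0 * p 1) (by
      intro x y hxy
      have hpp := hp x y hxy
      simp only [map_add, map_mul, map_neg, eval_X, Matrix.cons_val_zero, Matrix.cons_val_one,
        Matrix.head_cons]
      linarith)
    set g : MvPolynomial (Fin 2) ℝ := X 0 * p 0 + X 1 * p 1 with hg
    refine ⟨![X 0 * g + (p 0 + X 1 * h) * (1 - X 0 ^ 2) + (p 1 - X 0 * h) * (-(X 0 * X 1)),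
             X 1 * g + (p 0 + X 1 * h) * (-(X 0 * X 1)) + (p 1 - X 0 * h) * (1 - X 1 ^ 2)],
           ?_, ?_⟩
    · show p 0 = (1 - X 1 ^ 2) * _ + X 0 * X 1 * _
      simp only [Matrix.cons_val_zero, Matrix.cons_val_one, Matrix.head_cons, hg]
      linear_combination (-(X 1) : MvPolynomial (Fin 2) ℝ) * hh
    · show p 1 = X 0 * X 1 * _ + (1 - X 0 ^ 2) * _
      simp only [Matrix.cons_val_zero, Matrix.cons_val_one, Matrix.head_cons, hg]
      linear_combination (X 0 : MvPolynomial (Fin 2) ℝ) * hh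
  · rintro ⟨q, h0, h1⟩ x y hxy
    rw [h0, h1]
    simp only [map_add, map_mul, map_sub, map_pow, map_one, eval_X, Matrix.cons_val_zero,
      Matrix.cons_val_one, Matrix.head_cons]
    linear_combination (y * eval ![x, y] (q 0) - x * eval ![x, y] (q 1)) * hxy
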